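/- Let 2 ≤ k ≤ d, θ > 0, and let v₁,…,v_k, w be unit vectors in ℝ^d such that the simplex σ = conv{0, v₁, …, v_k} has fullness Θ(σ) ≥ θ. Then there exists an index 1 ≤ i ≤ k such that the simplex obtained by replacing v_i with w satisfies Θ(conv{0, v₁,…,v_{i−1}, w, v_{i+1},…,v_k}) ≥ θ/(k·2^{k+1}). -/

import Mathlib

open Metric Set MeasureTheory
open scoped RealInnerProductSpace ENNReal NNReal Matrix

noncomputable section

abbrev Euc (d : ℕ) := EuclideanSpace ℝ (Fin d)

/-- Points of the ambient space having a unique nearest point in `A`. -/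
def unp {d : ℕ} (A : Set (Euc d)) : Set (Euc d) :=
  {x | ∃! a, a ∈ A ∧ dist x a = Metric.infDist x A}

/-- Federer's local reach `reach (A, a)`. -/
def reachAt {d : ℕ} (A : Set (Euc d)) (a : Euc d) : ℝ≥0∞ :=
  sSup {r : ℝ≥0∞ | ∀ x : Euc d, edist x a < r → x ∈ unp A}

/-- Federer's reach of a set. -/
def reach {d : ℕ} (A : Set (Euc d)) : ℝ≥0∞ := ⨅ a ∈ A, reachAt A a

/-- The tangent cone of `A` at `a`: `u` is a tangent vector iff `u = 0` or `u` is a limit of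
`r i • (x i - a)` with `x i ∈ A \ {a}`, `x i → a`, `r i > 0`. -/
def tanCone {d : ℕ} (A : Set (Euc d)) (a : Euc d) : Set (Euc d) :=
  {u | u = 0 ∨ ∃ (x : ℕ → Euc d) (r : ℕ → ℝ),
    (∀ n, x n ∈ A ∧ x n ≠ a) ∧
    Filter.Tendsto x Filter.atTop (nhds a) ∧
    (∀ n, 0 < r n) ∧
    Filter.Tendsto (fun n => r n • (x n - a)) Filter.atTop (nhds u)}

/-- The dimension of the tangent cone of `A` at `a`. -/
def tanDim {d : ℕ} (A : Set (Euc d)) (a : Euc d) : ℕ :=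
  Module.finrank ℝ (Submodule.span ℝ (tanCone A a))

/-- The set of points of `A` at which the tangent cone has dimension `k`. -/
def Tk {d : ℕ} (A : Set (Euc d)) (k : ℕ) : Set (Euc d) :=
  {x | x ∈ A ∧ tanDim A x = k}

/-- Whitney's fullness `Θ(σ) = vol_k(σ) / (diam σ)^k` of a set. -/
def fullness {d : ℕ} (k : ℕ) (s : Set (Euc d)) : ℝ :=
  (μH[(k : ℝ)] s).toReal / (Metric.diam s) ^ k

/-- The metric `ρ_k` on the Grassmannian of subspaces of `ℝ^d`. -/
def grassDist {d : ℕ} (U V : Submodule ℝ (Euc d)) : ℝ :=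
  max (sSup ((fun u => Metric.infDist u (V : Set (Euc d))) '' {u | u ∈ U ∧ ‖u‖ = 1}))
      (sSup ((fun v => Metric.infDist v (U : Set (Euc d))) '' {v | v ∈ V ∧ ‖v‖ = 1}))

namespace Stmt8Aux

variable {E : Type*} [NormedAddCommGroup E] [InnerProductSpace ℝ E] {k : ℕ}

/-- The Gram matrix of a finite family of vectors. -/
def gram (u : Fin k → E) : Matrix (Fin k) (Fin k) ℝ :=
  Matrix.of fun i j => ⟪u i, u j⟫

lemma gram_apply (u : Fin k → E) (i j : Fin k) : gram u i j = ⟪u i, u j⟫ := rfl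

lemma gram_mul (u : Fin k → E) (N : Matrix (Fin k) (Fin k) ℝ) :
    gram (fun j => ∑ s, N s j • u s) = Nᵀ * gram u * N := by
  classical
  ext i j
  simp only [gram, Matrix.of_apply, Matrix.mul_apply, Matrix.transpose_apply,
    sum_inner, inner_sum, real_inner_smul_left, real_inner_smul_right,
    Finset.mul_sum, Finset.sum_mul]
  rw [Finset.sum_comm]
  exact Finset.sum_comm.trans
    (Finset.sum_congr rfl fun s _ => Finset.sum_congr rfl fun t _ => by ring)

lemma det_updateCol_one (i : Fin k) (c : Fin k → ℝ) :
    ((1 : Matrix (Fin k) (Fin k) ℝ).updateCol i c).det = c i := by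
  classical
  rw [← Matrix.cramer_apply, Matrix.cramer_one]
  rfl

lemma det_gram_update_sum (u : Fin k → E) (i : Fin k) (c : Fin k → ℝ) :
    (gram (Function.update u i (∑ s, c s • u s))).det = c i ^ 2 * (gram u).det := by
  classical
  have h : Function.update u i (∑ s, c s • u s)
      = fun j => ∑ s, ((1 : Matrix (Fin k) (Fin k) ℝ).updateCol i c) s j • u s := by
    funext j
    by_cases hj : j = i
    · subst hj
      simp [Matrix.updateCol_apply]
    · rw [Function.update_of_ne hj]
      simp [Matrix.updateCol_apply, hj, Matrix.one_apply, ite_smul]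
  rw [h, gram_mul, Matrix.det_mul, Matrix.det_mul, Matrix.det_transpose, det_updateCol_one]
  ring


lemma det_gram_update_add (u : Fin k → E) (i : Fin k) (p q z : E)
    (hq : ∀ j, j ≠ i → ⟪q, u j⟫ = 0) (hpq : ⟪q, p⟫ = 0)
    (hz : ‖z‖ = 1) (hzu : ∀ j, j ≠ i → ⟪z, u j⟫ = 0) (hzp : ⟪z, p⟫ = 0) :
    (gram (Function.update u i (p + q))).det
      = (gram (Function.update u i p)).det + ‖q‖ ^ 2 * (gram (Function.update u i z)).det := by
  classical
  set A := gram (Function.update u i p) with hA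
  set B := gram (Function.update u i z) with hB
  have hpq' : ⟪p, q⟫ = 0 := by rw [real_inner_comm]; exact hpq
  have hq' : ∀ j, j ≠ i → ⟪u j, q⟫ = 0 := fun j hj => by rw [real_inner_comm]; exact hq j hj
  have hzu' : ∀ j, j ≠ i → ⟪u j, z⟫ = 0 := fun j hj => by rw [real_inner_comm]; exact hzu j hj
  have key1 : ⟪p + q, p + q⟫ = ⟪p, p⟫ + ‖q‖ ^ 2 := by
    rw [inner_add_left, inner_add_right, inner_add_right, hpq, hpq',
      real_inner_self_eq_norm_sq q]
    ring
  have key2 : ∀ b, b ≠ i → ⟪p + q, u b⟫ = ⟪p, u b⟫ := fun b hb => by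
    rw [inner_add_left, hq b hb, add_zero]
  have key3 : ∀ a, a ≠ i → ⟪u a, p + q⟫ = ⟪u a, p⟫ := fun a ha => by
    rw [inner_add_right, hq' a ha, add_zero]
  have h1 : gram (Function.update u i (p + q))
      = A.updateRow i (fun b => A i b + (Pi.single i (‖q‖ ^ 2) : Fin k → ℝ) b) := by
    ext a b
    rw [Matrix.updateRow_apply]
    by_cases ha : a = i
    · rw [if_pos ha]
      by_cases hb : b = i
      · rw [hA, gram_apply, gram_apply, ha, hb, Function.update_self, Function.update_self,
          key1, Pi.single_eq_same]
      · rw [hA, gram_apply, gram_apply, ha, Function.update_self, Function.update_self,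
          Function.update_of_ne hb, Function.update_of_ne hb, key2 b hb,
          Pi.single_eq_of_ne hb, add_zero]
    · rw [if_neg ha]
      by_cases hb : b = i
      · rw [hA, gram_apply, gram_apply, hb, Function.update_self, Function.update_self,
          Function.update_of_ne ha, Function.update_of_ne ha, key3 a ha]
      · rw [hA, gram_apply, gram_apply, Function.update_of_ne ha, Function.update_of_ne ha,
          Function.update_of_ne hb, Function.update_of_ne hb]
  have h3 : (A.updateRow i ((Pi.single i 1 : Fin k → ℝ))).det = B.det := by
    set M := A.updateRow i ((Pi.single i 1 : Fin k → ℝ)) with hM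
    have hMB : M.updateCol i (fun j => B j i) = B := by
      ext a b
      by_cases hb : b = i
      · rw [hb, Matrix.updateCol_self]
      · rw [Matrix.updateCol_ne hb, hM, Matrix.updateRow_apply]
        by_cases ha : a = i
        · rw [if_pos ha, Pi.single_eq_of_ne hb, hB, gram_apply, ha, Function.update_self,
            Function.update_of_ne hb, hzu b hb]
        · rw [if_neg ha, hA, hB, gram_apply, gram_apply, Function.update_of_ne ha,
            Function.update_of_ne ha, Function.update_of_ne hb, Function.update_of_ne hb]
    have hcol : (fun j => M j i)
        = (fun j => B j i) + (fun j => if j = i then 0 else ⟪u j, p⟫) := by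
      funext j
      rw [Pi.add_apply, hM, Matrix.updateRow_apply]
      by_cases hj : j = i
      · rw [if_pos hj, if_pos hj, hj, Pi.single_eq_same, hB, gram_apply, Function.update_self,
          real_inner_self_eq_norm_sq z, hz]
        norm_num
      · rw [if_neg hj, if_neg hj, hA, hB, gram_apply, gram_apply, Function.update_of_ne hj,
          Function.update_of_ne hj, Function.update_self, Function.update_self,
          hzu' j hj, zero_add]
    have hzero : (M.updateCol i (fun j => if j = i then 0 else ⟪u j, p⟫)).det = 0 := by
      apply Matrix.det_eq_zero_of_row_eq_zero i
      intro j
      by_cases hj : j = i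
      · rw [hj, Matrix.updateCol_self, if_pos rfl]
      · rw [Matrix.updateCol_ne hj, hM, Matrix.updateRow_self,
          Pi.single_eq_of_ne hj]
    calc M.det = (M.updateCol i (fun j => M j i)).det := by rw [Matrix.updateCol_eq_self]
      _ = (M.updateCol i ((fun j => B j i) + (fun j => if j = i then 0 else ⟪u j, p⟫))).det := by
          rw [← hcol]
      _ = (M.updateCol i (fun j => B j i)).det
            + (M.updateCol i (fun j => if j = i then 0 else ⟪u j, p⟫)).det := by
          rw [Matrix.det_updateCol_add]
      _ = B.det := by rw [hMB, hzero, add_zero]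
  have hsingle : (fun b => A i b + (Pi.single i (‖q‖ ^ 2) : Fin k → ℝ) b)
      = A i + (‖q‖ ^ 2 : ℝ) • (Pi.single i 1 : Fin k → ℝ) := by
    funext b
    rw [Pi.add_apply, Pi.smul_apply, smul_eq_mul]
    congr 1
    by_cases hb : b = i
    · rw [hb, Pi.single_eq_same, Pi.single_eq_same, mul_one]
    · rw [Pi.single_eq_of_ne hb, Pi.single_eq_of_ne hb, mul_zero]
  rw [h1, hsingle, Matrix.det_updateRow_add, Matrix.updateRow_eq_self,
    Matrix.det_updateRow_smul, h3]


variable {d : ℕ}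

set_option maxHeartbeats 1000000 in
lemma gram_main (hk0 : 0 < k) (v : Fin k → EuclideanSpace ℝ (Fin d)) (w : EuclideanSpace ℝ (Fin d))
    (hv : ∀ i, ‖v i‖ = 1) (hw : ‖w‖ = 1)
    (hnn : ∀ u : Fin k → EuclideanSpace ℝ (Fin d), 0 ≤ (gram u).det) :
    ∃ i, (gram v).det / (k : ℝ) ^ 2 ≤ (gram (Function.update v i w)).det := by
  classical
  set G := (gram v).det with hG
  have hG0 : 0 ≤ G := hnn v
  set V := Submodule.span ℝ (Set.range v) with hV
  set p : EuclideanSpace ℝ (Fin d) := (V.orthogonalProjectionOnto w : EuclideanSpace ℝ (Fin d)) with hp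
  set q : EuclideanSpace ℝ (Fin d) := w - p with hqdef
  have hpV : p ∈ V := (V.orthogonalProjectionOnto w).2
  have hqperp : ∀ x ∈ V, ⟪q, x⟫ = 0 := by
    intro x hx
    have hq : q ∈ Vᗮ := V.sub_starProjection_mem_orthogonal w
    exact (Submodule.mem_orthogonal' V q).mp hq x hx
  have hvV : ∀ j, v j ∈ V := fun j => Submodule.subset_span (Set.mem_range_self j)
  obtain ⟨c, hc⟩ := (Submodule.mem_span_range_iff_exists_fun ℝ).mp hpV
  -- norms
  have hpq0 : ⟪q, p⟫ = 0 := hqperp p hpV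
  have hw_split : p + q = w := by rw [hqdef]; abel
  have hnorm : ‖p‖ ^ 2 + ‖q‖ ^ 2 = 1 := by
    have h1 : ‖p + q‖ ^ 2 = ‖p‖ ^ 2 + 2 * ⟪p, q⟫ + ‖q‖ ^ 2 := norm_add_sq_real p q
    have h2 : ⟪p, q⟫ = 0 := by rw [real_inner_comm]; exact hpq0
    rw [hw_split, hw, h2] at h1
    norm_num at h1
    linarith
  -- choose i with maximal |c i|
  obtain ⟨i, -, hmax⟩ := Finset.exists_max_image Finset.univ (fun j => |c j|) ⟨⟨0, hk0⟩, Finset.mem_univ _⟩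
  refine ⟨i, ?_⟩
  -- ‖p‖ ≤ k * |c i|
  have hpbound : ‖p‖ ≤ (k : ℝ) * |c i| := by
    calc ‖p‖ = ‖∑ s, c s • v s‖ := by rw [hc]
      _ ≤ ∑ s, ‖c s • v s‖ := norm_sum_le _ _
      _ = ∑ s, |c s| := by
          refine Finset.sum_congr rfl fun s _ => ?_
          rw [norm_smul, hv s, mul_one, Real.norm_eq_abs]
      _ ≤ ∑ _s : Fin k, |c i| := Finset.sum_le_sum fun s _ => hmax s (Finset.mem_univ s)
      _ = (k : ℝ) * |c i| := by rw [Finset.sum_const, Finset.card_univ, Fintype.card_fin,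
            nsmul_eq_mul]
  -- the key lower bound
  have hdetp : (gram (Function.update v i p)).det = c i ^ 2 * G := by
    rw [← hc]; exact det_gram_update_sum v i c
  have main : c i ^ 2 * G + ‖q‖ ^ 2 * G ≤ (gram (Function.update v i w)).det := by
    by_cases hq0 : q = 0
    · have : w = p := by rw [← hw_split, hq0, add_zero]
      rw [this, hdetp, hq0]
      simp
    · set z : EuclideanSpace ℝ (Fin d) := ‖q‖⁻¹ • q with hzdef
      have hqnorm : ‖q‖ ≠ 0 := fun h => hq0 (norm_eq_zero.mp h)
      have hznorm : ‖z‖ = 1 := by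
        rw [hzdef, norm_smul, norm_inv, norm_norm, inv_mul_cancel₀ hqnorm]
      have hzperp : ∀ x ∈ V, ⟪z, x⟫ = 0 := fun x hx => by
        rw [hzdef, real_inner_smul_left, hqperp x hx, mul_zero]
      -- split identity for the new simplex
      have hsplit1 : (gram (Function.update v i w)).det
          = (gram (Function.update v i p)).det + ‖q‖ ^ 2 * (gram (Function.update v i z)).det := by
        rw [← hw_split]
        exact det_gram_update_add v i p q z (fun j _ => hqperp (v j) (hvV j)) hpq0
          hznorm (fun j _ => hzperp (v j) (hvV j)) (hzperp p hpV)
      -- split identity for the old simplex: compare G with det gram (update v i z)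
      set U := Submodule.span ℝ (Set.range (Function.update v i 0)) with hU
      have hUV : U ≤ V := by
        rw [hU]
        apply Submodule.span_le.mpr
        rintro x ⟨j, rfl⟩
        by_cases hj : j = i
        · rw [hj, Function.update_self]; exact V.zero_mem
        · rw [Function.update_of_ne hj]; exact hvV j
      set a : EuclideanSpace ℝ (Fin d) := (U.orthogonalProjectionOnto (v i) : EuclideanSpace ℝ (Fin d)) with ha
      set r : EuclideanSpace ℝ (Fin d) := v i - a with hrdef
      have haU : a ∈ U := (U.orthogonalProjectionOnto (v i)).2
      have hrperp : ∀ x ∈ U, ⟪r, x⟫ = 0 := by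
        intro x hx
        have hr : r ∈ Uᗮ := U.sub_starProjection_mem_orthogonal (v i)
        exact (Submodule.mem_orthogonal' U r).mp hr x hx
      have hvjU : ∀ j, j ≠ i → v j ∈ U := fun j hj => by
        have : Function.update v i 0 j ∈ Set.range (Function.update v i 0) := Set.mem_range_self j
        rw [Function.update_of_ne hj] at this
        exact Submodule.subset_span this
      have hra : ⟪r, a⟫ = 0 := hrperp a haU
      have hsplit2 : G = (gram (Function.update v i a)).det
          + ‖r‖ ^ 2 * (gram (Function.update v i z)).det := by
        have har : a + r = v i := by rw [hrdef]; abel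
        have := det_gram_update_add v i a r z (fun j hj => hrperp (v j) (hvjU j hj)) hra
          hznorm (fun j _ => hzperp (v j) (hvV j)) (hzperp a (hUV haU))
        rw [har, Function.update_eq_self] at this
        exact this
      have hdeta : (gram (Function.update v i a)).det = 0 := by
        obtain ⟨c', hc'⟩ := (Submodule.mem_span_range_iff_exists_fun ℝ).mp haU
        have hsum : ∑ s, (Function.update c' i 0 : Fin k → ℝ) s • v s = a := by
          rw [← hc']
          refine Finset.sum_congr rfl fun s _ => ?_
          by_cases hs : s = i
          · rw [hs, Function.update_self, Function.update_self]
            simp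
          · rw [Function.update_of_ne hs, Function.update_of_ne hs]
        rw [← hsum, det_gram_update_sum v i (Function.update c' i 0), Function.update_self]
        ring
      have hr1 : ‖r‖ ^ 2 ≤ 1 := by
        have h1 : ‖a + r‖ ^ 2 = ‖a‖ ^ 2 + 2 * ⟪a, r⟫ + ‖r‖ ^ 2 := norm_add_sq_real a r
        have h2 : ⟪a, r⟫ = 0 := by rw [real_inner_comm]; exact hra
        have har : a + r = v i := by rw [hrdef]; abel
        rw [har, hv i, h2] at h1
        norm_num at h1
        nlinarith [sq_nonneg ‖a‖]
      have hDnn : 0 ≤ (gram (Function.update v i z)).det := hnn _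
      have hGD : G ≤ (gram (Function.update v i z)).det := by
        rw [hsplit2, hdeta, zero_add]
        nlinarith
      rw [hsplit1, hdetp]
      nlinarith [sq_nonneg ‖q‖]
  -- conclude
  have hci : 1 ≤ (k : ℝ) ^ 2 * (c i ^ 2 + ‖q‖ ^ 2) := by
    have hk1 : (1 : ℝ) ≤ (k : ℝ) := by exact_mod_cast hk0
    have h1 : ‖p‖ ^ 2 ≤ (k : ℝ) ^ 2 * c i ^ 2 := by
      have h2 := mul_le_mul hpbound hpbound (norm_nonneg p)
        (by positivity : (0 : ℝ) ≤ (k : ℝ) * |c i|)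
      nlinarith [sq_abs (c i)]
    have hk2 : (1 : ℝ) ≤ (k : ℝ) ^ 2 := by nlinarith
    nlinarith [sq_nonneg ‖q‖, mul_nonneg (sub_nonneg.mpr hk2) (sq_nonneg ‖q‖)]
  have hkpos : (0 : ℝ) < (k : ℝ) ^ 2 := by positivity
  rw [div_le_iff₀ hkpos]
  calc G ≤ ((c i ^ 2 + ‖q‖ ^ 2) * G) * (k : ℝ) ^ 2 := by nlinarith
    _ ≤ (gram (Function.update v i w)).det * (k : ℝ) ^ 2 := by nlinarith


open Module

lemma exists_superset_finrank (n : ℕ) (V : Submodule ℝ (EuclideanSpace ℝ (Fin d)))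
    (h1 : finrank ℝ V ≤ n) (h2 : n ≤ d) :
    ∃ W : Submodule ℝ (EuclideanSpace ℝ (Fin d)), V ≤ W ∧ finrank ℝ W = n := by
  induction n with
  | zero => exact ⟨V, le_rfl, Nat.le_antisymm h1 (Nat.zero_le _)⟩
  | succ n ih =>
    rcases eq_or_lt_of_le h1 with heq | hlt
    · exact ⟨V, le_rfl, heq⟩
    · obtain ⟨W, hVW, hWrank⟩ := ih (Nat.lt_succ_iff.mp hlt) (Nat.le_of_succ_le h2)
      obtain ⟨m, hm⟩ := Submodule.exists_of_finrank_lt W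
        (by rw [hWrank, finrank_euclideanSpace_fin]; omega)
      have hmW : m ∉ W := fun h => hm 1 one_ne_zero (by simpa using h)
      have hm0 : m ≠ 0 := fun h => hmW (h ▸ W.zero_mem)
      refine ⟨W ⊔ (ℝ ∙ m), le_trans hVW le_sup_left, ?_⟩
      have hinf : W ⊓ (ℝ ∙ m) = ⊥ := by
        rw [eq_bot_iff]
        rintro x ⟨hxW, hxm⟩
        obtain ⟨t, rfl⟩ := Submodule.mem_span_singleton.mp hxm
        rcases eq_or_ne t 0 with rfl | ht
        · simp
        · exact absurd hxW (hm t ht)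
      have hsum := Submodule.finrank_sup_add_finrank_inf_eq W (ℝ ∙ m)
      rw [hinf, finrank_bot, add_zero, finrank_span_singleton hm0, hWrank] at hsum
      exact hsum

lemma exists_rep (hkd : k ≤ d) (u : Fin k → EuclideanSpace ℝ (Fin d)) :
    ∃ (f : EuclideanSpace ℝ (Fin k) →ₗᵢ[ℝ] EuclideanSpace ℝ (Fin d))
      (g : EuclideanSpace ℝ (Fin k) →ₗ[ℝ] EuclideanSpace ℝ (Fin k)),
      ∀ i, f (g (EuclideanSpace.basisFun (Fin k) ℝ i)) = u i := by
  classical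
  have hVle : finrank ℝ (Submodule.span ℝ (Set.range u)) ≤ k := by
    refine le_trans (finrank_span_le_card (R := ℝ) (Set.range u)) ?_
    rw [Set.toFinset_range]
    exact le_trans (Finset.card_image_le) (by simp)
  obtain ⟨W, hVW, hWrank⟩ := exists_superset_finrank k _ hVle hkd
  let b : OrthonormalBasis (Fin k) ℝ W := (stdOrthonormalBasis ℝ W).reindex (finCongr hWrank)
  have huW : ∀ i, u i ∈ W := fun i => hVW (Submodule.subset_span (Set.mem_range_self i))
  refine ⟨W.subtypeₗᵢ.comp b.repr.symm.toLinearIsometry,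
    (EuclideanSpace.basisFun (Fin k) ℝ).toBasis.constr ℝ (fun i => b.repr ⟨u i, huW i⟩),
    fun i => ?_⟩
  have h1 : (EuclideanSpace.basisFun (Fin k) ℝ).toBasis i = EuclideanSpace.basisFun (Fin k) ℝ i := by
    rw [OrthonormalBasis.coe_toBasis]
  rw [← h1, Basis.constr_basis]
  have h2 : b.repr.symm (b.repr ⟨u i, huW i⟩) = ⟨u i, huW i⟩ :=
    LinearIsometryEquiv.symm_apply_apply _ _
  calc (W.subtypeₗᵢ.comp b.repr.symm.toLinearIsometry) (b.repr ⟨u i, huW i⟩)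
      = ((⟨u i, huW i⟩ : W) : EuclideanSpace ℝ (Fin d)) := by
        exact congrArg Subtype.val h2
    _ = u i := rfl

lemma gram_det_of_rep {u : Fin k → EuclideanSpace ℝ (Fin d)}
    (f : EuclideanSpace ℝ (Fin k) →ₗᵢ[ℝ] EuclideanSpace ℝ (Fin d))
    (g : EuclideanSpace ℝ (Fin k) →ₗ[ℝ] EuclideanSpace ℝ (Fin k))
    (h : ∀ i, f (g (EuclideanSpace.basisFun (Fin k) ℝ i)) = u i) :
    (gram u).det = LinearMap.det g ^ 2 := by
  classical
  set eb := EuclideanSpace.basisFun (Fin k) ℝ with heb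
  set N := LinearMap.toMatrix eb.toBasis eb.toBasis g with hN
  have hrep : ∀ i : Fin k, g (eb i) = ∑ s, N s i • eb s := by
    intro i
    have h0 := Basis.sum_repr eb.toBasis (g (eb i))
    have h1 : ∀ s, eb.toBasis.repr (g (eb i)) s = N s i := by
      intro s
      rw [hN, LinearMap.toMatrix_apply, OrthonormalBasis.coe_toBasis]
    calc g (eb i) = ∑ s, eb.toBasis.repr (g (eb i)) s • eb.toBasis s := h0.symm
      _ = ∑ s, N s i • eb s := by
          refine Finset.sum_congr rfl fun s _ => ?_
          rw [h1 s, OrthonormalBasis.coe_toBasis]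
  have hgram : gram u = gram (fun i => g (eb i)) := by
    ext i j
    rw [gram_apply, gram_apply, ← h i, ← h j, LinearIsometry.inner_map_map]
  have h2 : gram (fun i => g (eb i)) = Nᵀ * gram (fun s : Fin k => eb s) * N := by
    rw [show (fun i => g (eb i)) = fun j => ∑ s, N s j • eb s from funext hrep]
    exact gram_mul _ N
  have h3 : gram (fun s : Fin k => eb s) = 1 := by
    ext i j
    have horth := eb.orthonormal
    rw [orthonormal_iff_ite] at horth
    rw [gram_apply, horth i j, Matrix.one_apply]
  rw [hgram, h2, h3, Matrix.mul_one, Matrix.det_mul, Matrix.det_transpose,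
    ← LinearMap.det_toMatrix eb.toBasis g, ← hN]
  ring

lemma gram_det_nonneg (hkd : k ≤ d) (u : Fin k → EuclideanSpace ℝ (Fin d)) :
    0 ≤ (gram u).det := by
  obtain ⟨f, g, h⟩ := exists_rep hkd u
  rw [gram_det_of_rep f g h]
  positivity


/-- The reference simplex in `EuclideanSpace ℝ (Fin k)`. -/
def refSimplex (k : ℕ) : Set (EuclideanSpace ℝ (Fin k)) :=
  convexHull ℝ (Set.range (Fin.cons 0 (⇑(EuclideanSpace.basisFun (Fin k) ℝ))))

lemma measure_of_rep {u : Fin k → EuclideanSpace ℝ (Fin d)}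
    (f : EuclideanSpace ℝ (Fin k) →ₗᵢ[ℝ] EuclideanSpace ℝ (Fin d))
    (g : EuclideanSpace ℝ (Fin k) →ₗ[ℝ] EuclideanSpace ℝ (Fin k))
    (h : ∀ i, f (g (EuclideanSpace.basisFun (Fin k) ℝ i)) = u i) :
    μH[(k : ℝ)] (convexHull ℝ (Set.range (Fin.cons 0 u)))
      = ENNReal.ofReal |LinearMap.det g| * μH[(k : ℝ)] (refSimplex k) := by
  classical
  set eb := EuclideanSpace.basisFun (Fin k) ℝ with heb
  have himg : convexHull ℝ (Set.range (Fin.cons (0 : EuclideanSpace ℝ (Fin d)) u))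
      = ⇑f '' (⇑g '' refSimplex k) := by
    have hL : (⇑f ∘ ⇑g) '' (convexHull ℝ (Set.range (Fin.cons (0 : EuclideanSpace ℝ (Fin k)) ⇑eb)))
        = convexHull ℝ ((⇑f ∘ ⇑g) '' (Set.range (Fin.cons (0 : EuclideanSpace ℝ (Fin k)) ⇑eb))) := by
      have := (f.toLinearMap.comp g).image_convexHull
        (Set.range (Fin.cons (0 : EuclideanSpace ℝ (Fin k)) ⇑eb))
      simpa using this
    have hrange : (⇑f ∘ ⇑g) '' (Set.range (Fin.cons (0 : EuclideanSpace ℝ (Fin k)) ⇑eb))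
        = Set.range (Fin.cons (0 : EuclideanSpace ℝ (Fin d)) u) := by
      have hfg0 : (⇑f ∘ ⇑g) (0 : EuclideanSpace ℝ (Fin k)) = 0 := by simp
      have hfgu : (⇑f ∘ ⇑g) ∘ ⇑eb = u := funext fun i => h i
      rw [← Set.range_comp, Fin.comp_cons, hfg0, hfgu]
    rw [refSimplex, ← Set.image_comp, hL, hrange]
  rw [himg, Isometry.hausdorffMeasure_image f.isometry (Or.inl (by positivity))]
  haveI : (μH[(k : ℝ)] : Measure (EuclideanSpace ℝ (Fin k))).IsAddHaarMeasure := by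
    have hcast : ((k : ℕ) : ℝ) = ((finrank ℝ (EuclideanSpace ℝ (Fin k)) : ℕ) : ℝ) := by
      rw [finrank_euclideanSpace_fin]
    rw [hcast]
    infer_instance
  exact Measure.addHaar_image_linearMap _ g _

lemma measure_simplex (hkd : k ≤ d) (u : Fin k → EuclideanSpace ℝ (Fin d)) :
    μH[(k : ℝ)] (convexHull ℝ (Set.range (Fin.cons 0 u)))
      = ENNReal.ofReal (Real.sqrt (gram u).det) * μH[(k : ℝ)] (refSimplex k) := by
  obtain ⟨f, g, h⟩ := exists_rep hkd u
  rw [measure_of_rep f g h, gram_det_of_rep f g h, Real.sqrt_sq_eq_abs]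

lemma simplex_bounded (u : Fin k → EuclideanSpace ℝ (Fin d)) :
    Bornology.IsBounded (convexHull ℝ (Set.range (Fin.cons (0 : EuclideanSpace ℝ (Fin d)) u))) :=
  isBounded_convexHull.mpr (Set.finite_range _).isBounded

lemma simplex_diam_le (u : Fin k → EuclideanSpace ℝ (Fin d)) (hu : ∀ i, ‖u i‖ ≤ 1) :
    diam (convexHull ℝ (Set.range (Fin.cons (0 : EuclideanSpace ℝ (Fin d)) u))) ≤ 2 := by
  have hsub : convexHull ℝ (Set.range (Fin.cons (0 : EuclideanSpace ℝ (Fin d)) u))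
      ⊆ closedBall 0 1 := by
    apply convexHull_min _ (convex_closedBall _ _)
    rintro x hx
    rw [Fin.range_cons] at hx
    rcases hx with rfl | ⟨i, rfl⟩
    · simp
    · rw [mem_closedBall, dist_zero_right]
      exact hu i
  have h2 := diam_closedBall (x := (0 : EuclideanSpace ℝ (Fin d))) (by norm_num : (0:ℝ) ≤ 1)
  have h3 := diam_mono hsub isBounded_closedBall
  linarith

lemma simplex_one_le_diam (u : Fin k → EuclideanSpace ℝ (Fin d)) (j : Fin k) (hj : ‖u j‖ = 1) :
    1 ≤ diam (convexHull ℝ (Set.range (Fin.cons (0 : EuclideanSpace ℝ (Fin d)) u))) := by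
  have h0 : (0 : EuclideanSpace ℝ (Fin d))
      ∈ convexHull ℝ (Set.range (Fin.cons (0 : EuclideanSpace ℝ (Fin d)) u)) :=
    subset_convexHull _ _ (by rw [Fin.range_cons]; exact Set.mem_insert _ _)
  have h1 : u j ∈ convexHull ℝ (Set.range (Fin.cons (0 : EuclideanSpace ℝ (Fin d)) u)) :=
    subset_convexHull _ _ (by rw [Fin.range_cons]; exact Set.mem_insert_of_mem _ (Set.mem_range_self j))
  have h2 := dist_le_diam_of_mem (simplex_bounded u) h0 h1
  rw [dist_zero_left, hj] at h2
  exact h2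

end Stmt8Aux


theorem stmt8 {d k : ℕ} (hk : 2 ≤ k) (hkd : k ≤ d) (θ : ℝ) (hθ : 0 < θ)
    (v : Fin k → Euc d) (w : Euc d) (hv : ∀ i, ‖v i‖ = 1) (hw : ‖w‖ = 1)
    (hfull : θ ≤ fullness k (convexHull ℝ (Set.range (Fin.cons (0 : Euc d) v)))) :
    ∃ i : Fin k,
      θ / ((k : ℝ) * 2 ^ (k + 1)) ≤
        fullness k (convexHull ℝ (Set.range (Fin.cons (0 : Euc d) (Function.update v i w)))) := by
  classical
  have hk0 : 0 < k := by omega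
  have hmes := Stmt8Aux.measure_simplex hkd v
  have hd1 : 1 ≤ diam (convexHull ℝ (Set.range (Fin.cons (0 : Euc d) v))) :=
    Stmt8Aux.simplex_one_le_diam v ⟨0, hk0⟩ (hv _)
  have hdpos : (0:ℝ) < diam (convexHull ℝ (Set.range (Fin.cons (0 : Euc d) v))) ^ k :=
    pow_pos (by linarith) k
  have hdk1 : (1:ℝ) ≤ diam (convexHull ℝ (Set.range (Fin.cons (0 : Euc d) v))) ^ k :=
    one_le_pow₀ hd1
  have hMge : θ * diam (convexHull ℝ (Set.range (Fin.cons (0 : Euc d) v))) ^ k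
      ≤ (μH[(k : ℝ)] (convexHull ℝ (Set.range (Fin.cons (0 : Euc d) v)))).toReal := by
    simp only [fullness] at hfull
    exact (le_div_iff₀ hdpos).mp hfull
  have hMθ : θ ≤ (μH[(k : ℝ)] (convexHull ℝ (Set.range (Fin.cons (0 : Euc d) v)))).toReal :=
    le_trans (by nlinarith) hMge
  have hMpos : 0 < (μH[(k : ℝ)] (convexHull ℝ (Set.range (Fin.cons (0 : Euc d) v)))).toReal :=
    lt_of_lt_of_le hθ hMθ
  have hμ := ENNReal.toReal_pos_iff.mp hMpos
  rw [hmes] at hμ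
  obtain ⟨hμpos, hμlt⟩ := hμ
  have hκ0 : μH[(k : ℝ)] (Stmt8Aux.refSimplex k) ≠ 0 := by
    intro h0
    rw [h0, mul_zero] at hμpos
    exact lt_irrefl _ hμpos
  have hκtop : μH[(k : ℝ)] (Stmt8Aux.refSimplex k) ≠ ⊤ := by
    intro htop
    rcases eq_or_ne (ENNReal.ofReal (Real.sqrt (Stmt8Aux.gram v).det)) 0 with hz | hz
    · rw [hz, zero_mul] at hμpos
      exact lt_irrefl _ hμpos
    · rw [htop, ENNReal.mul_top hz] at hμlt
      exact lt_irrefl _ hμlt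
  have hsqrtGpos : 0 < Real.sqrt (Stmt8Aux.gram v).det := by
    rcases (Real.sqrt_nonneg (Stmt8Aux.gram v).det).lt_or_eq with h | h
    · exact h
    · rw [← h, ENNReal.ofReal_zero, zero_mul] at hμpos
      exact absurd hμpos (lt_irrefl _)
  have hGpos : 0 < (Stmt8Aux.gram v).det := by
    by_contra hG
    push_neg at hG
    rw [Real.sqrt_eq_zero'.mpr (by linarith)] at hsqrtGpos
    exact lt_irrefl _ hsqrtGpos
  have hκRpos : 0 < (μH[(k : ℝ)] (Stmt8Aux.refSimplex k)).toReal :=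
    ENNReal.toReal_pos hκ0 hκtop
  have hMeq : (μH[(k : ℝ)] (convexHull ℝ (Set.range (Fin.cons (0 : Euc d) v)))).toReal
      = Real.sqrt (Stmt8Aux.gram v).det * (μH[(k : ℝ)] (Stmt8Aux.refSimplex k)).toReal := by
    rw [hmes, ENNReal.toReal_mul, ENNReal.toReal_ofReal (Real.sqrt_nonneg _)]
  obtain ⟨i, hGi⟩ := Stmt8Aux.gram_main hk0 v w hv hw (fun u => Stmt8Aux.gram_det_nonneg hkd u)
  refine ⟨i, ?_⟩
  have hmesi := Stmt8Aux.measure_simplex hkd (Function.update v i w)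
  have hGi0 : 0 ≤ (Stmt8Aux.gram (Function.update v i w)).det := Stmt8Aux.gram_det_nonneg hkd _
  have hdi1 : 1 ≤ diam (convexHull ℝ (Set.range (Fin.cons (0 : Euc d) (Function.update v i w)))) :=
    Stmt8Aux.simplex_one_le_diam _ i (by rw [Function.update_self]; exact hw)
  have hdi2 : diam (convexHull ℝ (Set.range (Fin.cons (0 : Euc d) (Function.update v i w)))) ≤ 2 := by
    apply Stmt8Aux.simplex_diam_le
    intro j
    by_cases hj : j = i
    · rw [hj, Function.update_self, hw]
    · rw [Function.update_of_ne hj, hv j]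
  simp only [fullness]
  rw [hmesi, ENNReal.toReal_mul, ENNReal.toReal_ofReal (Real.sqrt_nonneg _)]
  have hsq : Real.sqrt (Stmt8Aux.gram v).det / (k:ℝ)
      ≤ Real.sqrt (Stmt8Aux.gram (Function.update v i w)).det := by
    have h1 := Real.sqrt_le_sqrt hGi
    rw [Real.sqrt_div hGpos.le, Real.sqrt_sq (by positivity : (0:ℝ) ≤ (k:ℝ))] at h1
    exact h1
  have hθle : θ ≤ Real.sqrt (Stmt8Aux.gram v).det * (μH[(k : ℝ)] (Stmt8Aux.refSimplex k)).toReal := by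
    rw [← hMeq]
    exact hMθ
  have hkR : (0:ℝ) < (k:ℝ) := by exact_mod_cast hk0
  have hdipos : (0:ℝ) < diam (convexHull ℝ (Set.range (Fin.cons (0 : Euc d) (Function.update v i w)))) ^ k :=
    pow_pos (by linarith) k
  have h2k : (0:ℝ) < 2 ^ k := by positivity
  have hnum : θ / (k:ℝ)
      ≤ Real.sqrt (Stmt8Aux.gram (Function.update v i w)).det
          * (μH[(k : ℝ)] (Stmt8Aux.refSimplex k)).toReal := by
    have h1 : θ / (k:ℝ)
        ≤ (Real.sqrt (Stmt8Aux.gram v).det * (μH[(k : ℝ)] (Stmt8Aux.refSimplex k)).toReal) / (k:ℝ) := by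
      gcongr
    have h2 : (Real.sqrt (Stmt8Aux.gram v).det * (μH[(k : ℝ)] (Stmt8Aux.refSimplex k)).toReal) / (k:ℝ)
        = (Real.sqrt (Stmt8Aux.gram v).det / (k:ℝ)) * (μH[(k : ℝ)] (Stmt8Aux.refSimplex k)).toReal := by
      ring
    rw [h2] at h1
    exact le_trans h1 (mul_le_mul_of_nonneg_right hsq hκRpos.le)
  have hdipow : diam (convexHull ℝ (Set.range (Fin.cons (0 : Euc d) (Function.update v i w)))) ^ k
      ≤ 2 ^ k := pow_le_pow_left₀ (by linarith) hdi2 k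
  have hpowsucc : (2:ℝ) ^ (k + 1) = 2 * 2 ^ k := by rw [pow_succ]; ring
  calc θ / ((k : ℝ) * 2 ^ (k + 1)) ≤ θ / ((k:ℝ) * 2 ^ k) := by
        apply div_le_div_of_nonneg_left hθ.le (by positivity)
        rw [hpowsucc]
        nlinarith
    _ = (θ / (k:ℝ)) / 2 ^ k := by ring
    _ ≤ (Real.sqrt (Stmt8Aux.gram (Function.update v i w)).det
          * (μH[(k : ℝ)] (Stmt8Aux.refSimplex k)).toReal) / 2 ^ k := by gcongr
    _ ≤ (Real.sqrt (Stmt8Aux.gram (Function.update v i w)).det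
          * (μH[(k : ℝ)] (Stmt8Aux.refSimplex k)).toReal)
          / diam (convexHull ℝ (Set.range (Fin.cons (0 : Euc d) (Function.update v i w)))) ^ k := by
        apply div_le_div_of_nonneg_left (by positivity) hdipos hdipow
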